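/- Let p be an odd prime and let F be a finite field of characteristic p whose degree [F:F_p] over the prime field is divisible by 4. Let η be the quadratic character of F (the unique multiplicative character of F of order 2), let ψ_p be a nontrivial additive character of F_p, and set ψ(x) = ψ_p(Tr_{F/F_p}(x)). Then Σ_{t∈F^×} η(t)ψ(t) = −p^{[F:F_p]/2}; equivalently, the Gauss sum g(η,ψ) := −Σ_{t∈F^×} η(t)ψ(t) equals |F|^{1/2}. -/

import Mathlib

attribute [local instance] ZMod.algebra

open Polynomial Finset

/-- The complex-valued quadratic character of a finite field. -/
noncomputable def qcC (F : Type*) [Field F] [Fintype F] [DecidableEq F] : MulChar F ℂ :=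
  (quadraticChar F).ringHomComp (Int.castRingHom ℂ)

lemma qcC_apply {F : Type*} [Field F] [Fintype F] [DecidableEq F] (x : F) :
    qcC F x = ((quadraticChar F x : ℤ) : ℂ) := rfl

lemma qcC_ne_one {F : Type*} [Field F] [Fintype F] [DecidableEq F] (hF : ringChar F ≠ 2) :
    qcC F ≠ 1 :=
  (MulChar.ringHomComp_ne_one_iff (RingHom.injective_int _)).mpr (quadraticChar_ne_one hF)

lemma qcC_isQuadratic (F : Type*) [Field F] [Fintype F] [DecidableEq F] :
    (qcC F).IsQuadratic :=
  (quadraticChar_isQuadratic F).comp _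

lemma exists_trace_ne_zero (p : ℕ) [Fact p.Prime] (K : Type*) [Field K] [Finite K] [CharP K p]
    [Algebra (ZMod p) K] :
    ∃ a : K, Algebra.trace (ZMod p) K a ≠ 0 := by
  have hrc : ringChar K = p := ringChar.eq K p
  subst hrc
  obtain ⟨b, hb⟩ := FiniteField.trace_to_zmod_nondegenerate K (one_ne_zero)
  rw [one_mul] at hb
  exact ⟨b, hb⟩

lemma psi_trace_ne_one (p : ℕ) [Fact p.Prime] (K : Type*) [Field K] [Finite K] [CharP K p]
    [Algebra (ZMod p) K] (ψp : AddChar (ZMod p) ℂ) (hψ : ψp ≠ 1) :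
    ψp.compAddMonoidHom (Algebra.trace (ZMod p) K).toAddMonoidHom ≠ 1 := by
  obtain ⟨a, ha⟩ := exists_trace_ne_zero p K
  obtain ⟨c, hc⟩ := AddChar.ne_one_iff.mp hψ
  rw [AddChar.ne_one_iff]
  refine ⟨(c * (Algebra.trace (ZMod p) K a)⁻¹) • a, ?_⟩
  rw [AddChar.compAddMonoidHom_apply, LinearMap.toAddMonoidHom_coe, map_smul, smul_eq_mul,
    mul_assoc, inv_mul_cancel₀ ha, mul_one]
  exact hc

lemma quadraticChar_ringEquiv {F K : Type*} [Field F] [Fintype F] [DecidableEq F]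
    [Field K] [Fintype K] [DecidableEq K] (e : F ≃+* K) (x : F) :
    quadraticChar K (e x) = quadraticChar F x := by
  by_cases hx : x = 0
  · simp [hx]
  have hex : e x ≠ 0 := fun h => hx (by simpa using congrArg e.symm h)
  have hiff : IsSquare (e x) ↔ IsSquare x := by
    constructor
    · rintro ⟨y, hy⟩
      refine ⟨e.symm y, e.injective ?_⟩
      simp [hy]
    · rintro ⟨y, hy⟩
      exact ⟨e y, by rw [hy, map_mul]⟩
  by_cases hs : IsSquare x
  · rw [(quadraticChar_one_iff_isSquare hex).mpr (hiff.mpr hs),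
      (quadraticChar_one_iff_isSquare hx).mpr hs]
  · rw [quadraticChar_neg_one_iff_not_isSquare.mpr (fun h => hs (hiff.mp h)),
      quadraticChar_neg_one_iff_not_isSquare.mpr hs]

lemma sum_psi_mul_sq {F : Type*} [Field F] [Fintype F] [DecidableEq F]
    (hF : ringChar F ≠ 2) (ψ : AddChar F ℂ) (hψ : ψ ≠ 1) {c : F} (hc : c ≠ 0) :
    ∑ x : F, ψ (c * x ^ 2) = qcC F c * gaussSum (qcC F) ψ := by
  have key : ∀ y : F, ∑ x ∈ univ.filter (fun x => x ^ 2 = y), ψ (c * x ^ 2)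
      = ((quadraticChar F y + 1 : ℤ) : ℂ) * ψ (c * y) := by
    intro y
    rw [Finset.sum_congr rfl (fun x hx => by rw [(mem_filter.mp hx).2]), sum_const,
      nsmul_eq_mul]
    congr 1
    rw [← quadraticChar_card_sqrts hF y]
    norm_cast
    rw [Set.toFinset_setOf]
  have h0 : ∑ x : F, ψ (c * x ^ 2)
      = ∑ y : F, ((quadraticChar F y + 1 : ℤ) : ℂ) * ψ (c * y) := by
    rw [← Finset.sum_fiberwise univ (fun x : F => x ^ 2) (fun x => ψ (c * x ^ 2))]
    exact Finset.sum_congr rfl fun y _ => key y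
  have h1 : ∑ y : F, ((quadraticChar F y + 1 : ℤ) : ℂ) * ψ (c * y)
      = gaussSum (qcC F) (ψ.mulShift c) + ∑ y : F, (ψ.mulShift c) y := by
    rw [gaussSum, ← Finset.sum_add_distrib]
    refine Finset.sum_congr rfl fun y _ => ?_
    rw [AddChar.mulShift_apply, qcC_apply]
    push_cast
    ring
  have h2 : ∑ y : F, (ψ.mulShift c) y = 0 :=
    AddChar.sum_eq_zero_of_ne_one (AddChar.IsPrimitive.of_ne_one hψ hc)
  have h3 : gaussSum (qcC F) (ψ.mulShift c) = qcC F c * gaussSum (qcC F) ψ := by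
    have hu := gaussSum_mulShift (qcC F) ψ (Units.mk0 c hc)
    have hsq : qcC F c * qcC F c = 1 := by
      rw [qcC_apply, ← Int.cast_mul, ← sq, quadraticChar_sq_one hc]
      norm_num
    rw [← hu]
    simp only [Units.val_mk0]
    rw [← mul_assoc, hsq, one_mul]
  rw [h0, h1, h2, h3, add_zero]

lemma eta_eq_qcC {F : Type*} [Field F] [Fintype F] [DecidableEq F] (hF : ringChar F ≠ 2)
    (η : MulChar F ℂ) (hη : orderOf η = 2) (t : Fˣ) : η t = qcC F t := by
  obtain ⟨g, hg⟩ := IsCyclic.exists_generator (α := Fˣ)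
  have h2 : ∀ u : Fˣ, η u * η u = 1 := by
    intro u
    have hpow : η ^ 2 = 1 := by rw [← hη]; exact pow_orderOf_eq_one η
    have : (η ^ 2) (u : F) = 1 := by rw [hpow, MulChar.one_apply_coe]
    rwa [sq, MulChar.mul_apply] at this
  have hmem : ∀ u : Fˣ, ∃ k : ℕ, g ^ k = u := by
    intro u
    simpa [Submonoid.mem_powers_iff] using mem_powers_iff_mem_zpowers.mpr (hg u)
  have hηg : η g = -1 := by
    rcases mul_self_eq_one_iff.mp (h2 g) with h | h
    · exfalso
      have hone : η = 1 := by
        refine MulChar.ext fun u => ?_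
        obtain ⟨k, rfl⟩ := hmem u
        rw [MulChar.one_apply_coe, Units.val_pow_eq_pow_val, map_pow, h, one_pow]
      rw [hone, orderOf_one] at hη
      norm_num at hη
    · exact h
  have hqg : quadraticChar F (g : F) = -1 := by
    rw [quadraticChar_neg_one_iff_not_isSquare]
    rintro ⟨y, hy⟩
    have hy0 : y ≠ 0 := by
      rintro rfl
      exact g.ne_zero (by simpa using hy)
    set u : Fˣ := Units.mk0 y hy0 with hu
    have hgu : g = u * u := Units.ext (by rw [Units.val_mul, hu, Units.val_mk0]; exact hy)
    have hcard : orderOf g = Fintype.card Fˣ :=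
      (orderOf_eq_card_of_forall_mem_zpowers hg).trans Nat.card_eq_fintype_card
    have hcardF : Fintype.card Fˣ = Fintype.card F - 1 := Fintype.card_units F
    have hodd : Fintype.card F % 2 = 1 := FiniteField.odd_card_of_char_ne_two hF
    have hbig : 1 < Fintype.card F := Fintype.one_lt_card
    have h1 : g ^ ((Fintype.card F - 1) / 2) = 1 := by
      have heq : g ^ ((Fintype.card F - 1) / 2) = u ^ (Fintype.card F - 1) := by
        rw [hgu, ← sq, ← pow_mul]
        congr 1
        omega
      rw [heq, ← hcardF, pow_card_eq_one]
    have hdvd : orderOf g ∣ (Fintype.card F - 1) / 2 := orderOf_dvd_of_pow_eq_one h1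
    have hle : orderOf g ≤ (Fintype.card F - 1) / 2 :=
      Nat.le_of_dvd (by omega) hdvd
    rw [hcard, hcardF] at hle
    omega
  obtain ⟨k, rfl⟩ := hmem t
  rw [Units.val_pow_eq_pow_val, map_pow, map_pow, hηg, qcC_apply, hqg]
  push_cast
  ring

set_option maxHeartbeats 2000000 in
/-- If `p` is an odd prime, `F` is a finite field of characteristic `p` with `4 ∣ [F : F_p]`,
`η` is the quadratic character of `F` and `ψ(x) = ψ_p(Tr_{F/F_p}(x))` for a nontrivial additive
character `ψ_p` of `F_p`, then `∑_{t ∈ F^×} η(t)ψ(t) = −p^{[F:F_p]/2}`. -/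
theorem stmt6 (p : ℕ) [Fact p.Prime] (hp : p ≠ 2)
    (F : Type*) [Field F] [Fintype F] [DecidableEq F] [CharP F p]
    (h4 : 4 ∣ Module.finrank (ZMod p) F)
    (η : MulChar F ℂ) (hη : orderOf η = 2)
    (ψp : AddChar (ZMod p) ℂ) (hψ : ψp ≠ 1) :
    ∑ t : Fˣ, η t * ψp (Algebra.trace (ZMod p) F t) =
      -(p : ℂ) ^ (Module.finrank (ZMod p) F / 2) := by
  classical
  obtain ⟨k, hk⟩ := h4
  have hn0 : 0 < Module.finrank (ZMod p) F := Module.finrank_pos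
  have hk0 : k ≠ 0 := by rintro rfl; rw [hk] at hn0; simp at hn0
  have hF2 : ringChar F ≠ 2 := by rw [ringChar.eq F p]; exact hp
  -- the subfield `E` and the quadratic extension `K = E(√d)`
  set E := GaloisField p (2 * k) with hE
  haveI : Fintype E := Fintype.ofFinite E
  have hE2 : ringChar E ≠ 2 := by rw [ringChar.eq E p]; exact hp
  obtain ⟨d, hd⟩ := FiniteField.exists_nonsquare hE2
  have hd0 : d ≠ 0 := fun h => hd ⟨0, by rw [h]; ring⟩
  set f : Polynomial E := X ^ 2 - C d with hf
  have hfm : f.Monic := monic_X_pow_sub_C d (by norm_num)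
  have hf0 : f ≠ 0 := hfm.ne_zero
  have hirr : Irreducible f :=
    X_pow_sub_C_irreducible_of_prime Nat.prime_two (fun b hb => hd ⟨b, by rw [← hb]; ring⟩)
  haveI := Fact.mk hirr
  set K := AdjoinRoot f with hKdef
  set pb : PowerBasis E K := AdjoinRoot.powerBasis hf0 with hpb
  haveI : Module.Finite E K := Module.Finite.of_basis pb.basis
  haveI : Finite K := (Module.finite_iff_finite (R := E)).mp inferInstance
  haveI : Fintype K := Fintype.ofFinite K
  haveI : CharP K p := charP_of_injective_algebraMap (algebraMap E K).injective p
  have htower := IsScalarTower.of_algebraMap_eq' (R := ZMod p) (S := E) (A := K)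
    (RingHom.ext_zmod _ _)
  haveI := htower
  have hdim : pb.dim = 2 := by rw [hpb, AdjoinRoot.powerBasis_dim, hf, natDegree_X_pow_sub_C]
  have hrankEK : Module.finrank E K = 2 := by rw [pb.finrank, hdim]
  have hcardE : Fintype.card E = p ^ (2 * k) := by
    rw [← Nat.card_eq_fintype_card, GaloisField.card p (2 * k) (by omega)]
  have hcardK : Fintype.card K = p ^ (4 * k) := by
    rw [Module.card_eq_pow_finrank (K := E) (V := K), hrankEK, hcardE, ← pow_mul]
    ring_nf
  have hcardF : Fintype.card F = p ^ (4 * k) := by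
    rw [Module.card_eq_pow_finrank (K := ZMod p) (V := F), ZMod.card, hk]
  set e : F ≃ₐ[ZMod p] K := FiniteField.algEquivOfCardEq p (hcardF.trans hcardK.symm) with he
  -- additive characters
  set ψF : AddChar F ℂ := ψp.compAddMonoidHom (Algebra.trace (ZMod p) F).toAddMonoidHom with hψF
  set ψK : AddChar K ℂ := ψp.compAddMonoidHom (Algebra.trace (ZMod p) K).toAddMonoidHom with hψK
  set ψE : AddChar E ℂ := ψp.compAddMonoidHom (Algebra.trace (ZMod p) E).toAddMonoidHom with hψE
  have hψKne : ψK ≠ 1 := psi_trace_ne_one p K ψp hψ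
  have hψEne : ψE ≠ 1 := psi_trace_ne_one p E ψp hψ
  -- the root and trace computations
  set r : K := AdjoinRoot.root f with hr
  have hr2 : r ^ 2 = algebraMap E K d := by
    have h := AdjoinRoot.eval₂_root f
    rw [hf] at h
    have h' : AdjoinRoot.root f ^ 2 = AdjoinRoot.of f d := by simpa [sub_eq_zero] using h
    exact h'
  have htr1 : Algebra.trace E K (1 : K) = 2 := by
    have := Algebra.trace_algebraMap (R := E) (S := K) (1 : E)
    rw [map_one] at this
    rw [this, hrankEK]
    simp
  have htrr : Algebra.trace E K r = 0 := by
    have hgen : pb.gen = r := by rw [hpb, AdjoinRoot.powerBasis_gen]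
    have hmin : minpoly E pb.gen = f := by
      rw [hgen, hr, AdjoinRoot.minpoly_root hf0, hfm.leadingCoeff, inv_one, map_one, mul_one]
    have := PowerBasis.trace_gen_eq_nextCoeff_minpoly pb
    rw [hmin, hgen] at this
    rw [this]
    have hnc : f.nextCoeff = 0 := by
      rw [nextCoeff_of_natDegree_pos (by rw [hf, natDegree_X_pow_sub_C]; norm_num), hf,
        natDegree_X_pow_sub_C]
      simp [coeff_X_pow]
    rw [hnc, neg_zero]
  -- trace of a general square
  have hsq_trace : ∀ a b : E, Algebra.trace E K ((algebraMap E K a + b • r) ^ 2)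
      = 2 * a ^ 2 + 2 * d * b ^ 2 := by
    intro a b
    have hexp : (algebraMap E K a + b • r) ^ 2
        = algebraMap E K (a ^ 2 + b ^ 2 * d) + (2 * a * b) • r := by
      rw [Algebra.smul_def, Algebra.smul_def]
      rw [add_sq, mul_pow, hr2]
      push_cast [map_add, map_mul, map_pow, map_ofNat]
      ring
    rw [hexp, map_add, Algebra.trace_algebraMap, hrankEK, map_smul, smul_eq_mul, htrr]
    simp only [mul_zero, add_zero, nsmul_eq_mul]
    push_cast
    ring
  -- the sum over `K` of `ψK (x^2)`, computed via the basis
  set b2 : Module.Basis (Fin 2) E K := pb.basis.reindex (finCongr hdim) with hb2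
  have hgen : pb.gen = r := by rw [hpb, AdjoinRoot.powerBasis_gen]
  have hb20 : b2 0 = 1 := by
    rw [hb2, Module.Basis.reindex_apply, pb.coe_basis]
    simp [finCongr]
  have hb21 : b2 1 = r := by
    rw [hb2, Module.Basis.reindex_apply, pb.coe_basis, hgen]
    simp [finCongr]
  set φ : E × E ≃ K := (finTwoArrowEquiv E).symm.trans b2.equivFun.toEquiv.symm with hφdef
  have hφ : ∀ v : E × E, φ v = algebraMap E K v.1 + v.2 • r := by
    intro v
    rw [hφdef]
    simp only [Equiv.trans_apply, LinearEquiv.coe_toEquiv_symm, EquivLike.coe_coe]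
    rw [Module.Basis.equivFun_symm_apply, Fin.sum_univ_two]
    rw [finTwoArrowEquiv_symm_apply]
    simp only [Matrix.cons_val_zero, Matrix.cons_val_one, Matrix.head_cons]
    rw [hb20, hb21, Algebra.smul_def, mul_one]
  have hψKtr : ∀ x : K, ψK x = ψE (Algebra.trace E K x) := by
    intro x
    rw [hψK, hψE]
    simp only [AddChar.compAddMonoidHom_apply, LinearMap.toAddMonoidHom_coe]
    rw [← Algebra.trace_trace (S := E)]
  have hway2 : ∑ x : K, ψK (x ^ 2)
      = (∑ a : E, ψE (2 * a ^ 2)) * (∑ b : E, ψE ((2 * d) * b ^ 2)) := by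
    rw [← Equiv.sum_comp φ (fun x => ψK (x ^ 2))]
    have hpt : ∀ v : E × E, ψK (φ v ^ 2) = ψE (2 * v.1 ^ 2) * ψE ((2 * d) * v.2 ^ 2) := by
      intro v
      rw [hφ v, hψKtr, hsq_trace]
      rw [show 2 * v.1 ^ 2 + 2 * d * v.2 ^ 2 = 2 * v.1 ^ 2 + (2 * d) * v.2 ^ 2 by ring]
      exact AddChar.map_add_eq_mul ψE _ _
    rw [Finset.sum_congr rfl fun v _ => hpt v, Fintype.sum_prod_type]
    exact (Finset.sum_mul_sum univ univ (fun a : E => ψE (2 * a ^ 2))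
      (fun b : E => ψE (2 * d * b ^ 2))).symm
  have h2E : (2 : E) ≠ 0 := Ring.two_ne_zero hE2
  have h2d : (2 : E) * d ≠ 0 := mul_ne_zero h2E hd0
  have hgE := gaussSum_sq (qcC_ne_one hE2) (qcC_isQuadratic E)
    (AddChar.IsPrimitive.of_ne_one hψEne)
  have hcardE4 : Fintype.card E % 4 = 1 := by
    have hoddp : Odd p := (Fact.out : p.Prime).odd_of_ne_two hp
    have hoddpk : Odd (p ^ k) := hoddp.pow
    obtain ⟨t, ht⟩ := hoddpk
    rw [hcardE, show 2 * k = k * 2 by ring, pow_mul, ht]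
    ring_nf
    omega
  have hqm1 : qcC E (-1) = 1 := by
    rw [qcC_apply, (quadraticChar_one_iff_isSquare (by norm_num : (-1:E) ≠ 0)).mpr
      (FiniteField.isSquare_neg_one_iff.mpr (by omega))]
    norm_num
  have hqd : qcC E d = -1 := by
    rw [qcC_apply, quadraticChar_neg_one_iff_not_isSquare.mpr hd]; norm_num
  have hq4 : qcC E (2 ^ 2 : E) = 1 := by
    rw [qcC_apply, quadraticChar_sq_one' h2E]; norm_num
  have hway2' : ∑ x : K, ψK (x ^ 2) = -(Fintype.card E : ℂ) := by
    rw [hway2, sum_psi_mul_sq hE2 ψE hψEne h2E, sum_psi_mul_sq hE2 ψE hψEne h2d]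
    have hmul : qcC E 2 * qcC E (2 * d) = -1 := by
      rw [← map_mul, show (2 : E) * (2 * d) = 2 ^ 2 * d by ring, map_mul, hq4, hqd, one_mul]
    calc qcC E 2 * gaussSum (qcC E) ψE * (qcC E (2 * d) * gaussSum (qcC E) ψE)
        = (qcC E 2 * qcC E (2 * d)) * (gaussSum (qcC E) ψE ^ 2) := by ring
      _ = -(Fintype.card E : ℂ) := by rw [hmul, hgE, hqm1]; ring
  have hway1 : ∑ x : K, ψK (x ^ 2) = gaussSum (qcC K) ψK := by
    have hK2 : ringChar K ≠ 2 := by rw [ringChar.eq K p]; exact hp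
    have := sum_psi_mul_sq hK2 ψK hψKne (c := (1 : K)) one_ne_zero
    simpa using this
  have hunits : ∑ t : Fˣ, η t * ψp (Algebra.trace (ZMod p) F t) = gaussSum (qcC F) ψF := by
    have hsum : ∑ t : Fˣ, η t * ψp (Algebra.trace (ZMod p) F t)
        = ∑ t : Fˣ, qcC F (t : F) * ψF (t : F) := by
      refine Finset.sum_congr rfl fun t _ => ?_
      rw [eta_eq_qcC hF2 η hη t]
      congr 1
    rw [hsum, gaussSum]
    have h0 : qcC F (0 : F) * ψF 0 = 0 := by rw [MulChar.map_zero, zero_mul]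
    rw [← Finset.sum_erase (f := fun x : F => qcC F x * ψF x) univ h0]
    exact Finset.sum_bij (fun (t : Fˣ) _ => (t : F))
      (fun t _ => Finset.mem_erase.mpr ⟨Units.ne_zero t, Finset.mem_univ _⟩)
      (fun a _ b _ hab => Units.ext hab)
      (fun b hb => ⟨Units.mk0 b (Finset.mem_erase.mp hb).1, Finset.mem_univ _, rfl⟩)
      (fun t _ => rfl)
  have htransfer : gaussSum (qcC F) ψF = gaussSum (qcC K) ψK := by
    rw [gaussSum, gaussSum]
    refine Fintype.sum_equiv e.toEquiv _ _ fun x => ?_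
    simp only [AlgEquiv.toEquiv_eq_coe, EquivLike.coe_coe]
    rw [hψF, hψK]
    simp only [AddChar.compAddMonoidHom_apply, LinearMap.toAddMonoidHom_coe]
    rw [Algebra.trace_eq_of_algEquiv e x]
    congr 1
    rw [qcC_apply, qcC_apply]
    have : quadraticChar K (e.toRingEquiv x) = quadraticChar F x :=
      quadraticChar_ringEquiv e.toRingEquiv x
    simpa using this.symm
  rw [hunits, htransfer, ← hway1, hway2', hcardE, hk,
    show 4 * k / 2 = 2 * k from by omega]
  push_cast
  ring
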